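/- Let s ≥ 0, β ∈ (1/2, 1). There exists a constant C = C(s, β) such that for all nonzero l, m, k ∈ ℤ² with l + m + k = 0 and |l| ≤ |m| ≤ |k|, one has | |k|^{2s}/|m|^{2β} − |m|^{2s}/|k|^{2β} | ≤ C |l|^{1−2β} |m|^{s−1} |k|^{s}. -/

import Mathlib

/-- The Euclidean norm of a lattice vector in ℤ². -/
noncomputable def znorm (v : ℤ × ℤ) : ℝ := Real.sqrt ((v.1 : ℝ) ^ 2 + (v.2 : ℝ) ^ 2)

lemma znorm_eq_complex (v : ℤ × ℤ) : znorm v = ‖(⟨(v.1:ℝ), (v.2:ℝ)⟩ : ℂ)‖ := by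
  rw [Complex.norm_def, Complex.normSq_mk, znorm]; ring_nf

lemma one_le_znorm (v : ℤ × ℤ) (hv : v ≠ 0) : 1 ≤ znorm v := by
  have h : (1:ℤ) ≤ v.1^2 + v.2^2 := by
    have hv' : v.1 ≠ 0 ∨ v.2 ≠ 0 := by
      by_contra hcon
      push_neg at hcon
      exact hv (Prod.ext hcon.1 hcon.2)
    rcases hv' with h | h
    · have h1 : 1 ≤ |v.1| := Int.one_le_abs h
      nlinarith [sq_nonneg v.2, sq_abs v.1, abs_nonneg v.1]
    · have h1 : 1 ≤ |v.2| := Int.one_le_abs h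
      nlinarith [sq_nonneg v.1, sq_abs v.2, abs_nonneg v.2]
  have h' : (1:ℝ) ≤ (v.1:ℝ)^2 + (v.2:ℝ)^2 := by exact_mod_cast h
  rw [znorm]
  nlinarith [Real.sq_sqrt (by linarith : (0:ℝ) ≤ (v.1:ℝ)^2 + (v.2:ℝ)^2),
    Real.sqrt_nonneg ((v.1:ℝ)^2 + (v.2:ℝ)^2)]

lemma znorm_add_le (a b : ℤ × ℤ) : znorm (a + b) ≤ znorm a + znorm b := by
  simp only [znorm_eq_complex]
  have h : (⟨(((a+b).1 : ℤ):ℝ), (((a+b).2 : ℤ):ℝ)⟩ : ℂ)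
      = (⟨((a.1:ℤ):ℝ), ((a.2:ℤ):ℝ)⟩ : ℂ) + ⟨((b.1:ℤ):ℝ), ((b.2:ℤ):ℝ)⟩ := by
    simp [Complex.ext_iff, Prod.fst_add, Prod.snd_add]
  rw [h]
  exact norm_add_le _ _

lemma znorm_neg (a : ℤ × ℤ) : znorm (-a) = znorm a := by
  simp [znorm, Prod.fst_neg, Prod.snd_neg]

theorem symmetrization_estimate_one (s β : ℝ) (hs : 0 ≤ s) (hβ1 : 1 / 2 < β) (hβ2 : β < 1) :
    ∃ C : ℝ, 0 < C ∧ ∀ l m k : ℤ × ℤ, l ≠ 0 → m ≠ 0 → k ≠ 0 → l + m + k = 0 →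
      znorm l ≤ znorm m → znorm m ≤ znorm k →
      |znorm k ^ (2 * s) / znorm m ^ (2 * β) - znorm m ^ (2 * s) / znorm k ^ (2 * β)| ≤
        C * znorm l ^ (1 - 2 * β) * znorm m ^ (s - 1) * znorm k ^ s := by
  set p : ℝ := 2 * s + 2 * β with hp_def
  have hp1 : 1 ≤ p := by simp only [hp_def]; linarith
  have hppos : 0 < p := by linarith
  refine ⟨p * (2 : ℝ) ^ s, by positivity, ?_⟩
  intro l m k hl hm hk hsum hLM hMK
  set L := znorm l
  set M := znorm m
  set K := znorm k
  have hL1 : 1 ≤ L := one_le_znorm l hl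
  have hM1 : 1 ≤ M := one_le_znorm m hm
  have hK1 : 1 ≤ K := one_le_znorm k hk
  have hLpos : 0 < L := by linarith
  have hMpos : 0 < M := by linarith
  have hKpos : 0 < K := by linarith
  -- triangle inequality: K ≤ L + M
  have hkeq : k = -(l + m) := by
    rw [← neg_eq_iff_eq_neg]; linear_combination -hsum
  have hKLM : K ≤ L + M := by
    have h := znorm_add_le l m
    rw [← znorm_neg (l + m), ← hkeq] at h
    exact h
  have hKsubM : K - M ≤ L := by linarith
  have hK2M : K ≤ 2 * M := by linarith
  -- the expression inside abs is nonneg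
  have hmono : M ^ (2*s) / K ^ (2*β) ≤ K ^ (2*s) / M ^ (2*β) := by
    apply div_le_div₀ (by positivity) (Real.rpow_le_rpow (le_of_lt hMpos) hMK (by linarith))
      (by positivity) (Real.rpow_le_rpow (le_of_lt hMpos) hMK (by linarith))
  rw [abs_of_nonneg (by linarith)]
  -- rewrite as a single fraction
  have hkey : K ^ (2*s) / M ^ (2*β) - M ^ (2*s) / K ^ (2*β)
      = (K ^ p - M ^ p) / (M ^ (2*β) * K ^ (2*β)) := by
    rw [hp_def, Real.rpow_add hKpos, Real.rpow_add hMpos]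
    have h1 : M ^ (2*β) ≠ 0 := by positivity
    have h2 : K ^ (2*β) ≠ 0 := by positivity
    field_simp
  rw [hkey]
  -- Bernoulli: K^p - M^p ≤ p * K^(p-1) * (K - M)
  have hber : K ^ p - M ^ p ≤ p * K ^ (p - 1) * (K - M) := by
    have hx : -1 ≤ M / K - 1 := by
      have : 0 < M / K := by positivity
      linarith
    have hb := one_add_mul_self_le_rpow_one_add hx hp1
    rw [show (1:ℝ) + (M/K - 1) = M/K by ring] at hb
    rw [Real.div_rpow (le_of_lt hMpos) (le_of_lt hKpos)] at hb
    have hKp : 0 < K ^ p := by positivity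
    have h2 := mul_le_mul_of_nonneg_left hb (le_of_lt hKp)
    rw [mul_div_cancel₀ _ (ne_of_gt hKp)] at h2
    have hKp1 : K ^ (p - 1) * K = K ^ p := by
      rw [Real.rpow_sub hKpos, Real.rpow_one, div_mul_cancel₀ _ (ne_of_gt hKpos)]
    have hKMdiv : K ^ p * (M / K) = K ^ (p-1) * M := by
      rw [← hKp1]; field_simp
    rw [show K ^ p * (1 + p * (M / K - 1)) = K^p + p*(K^p*(M/K)) - p*K^p from by ring] at h2
    rw [hKMdiv, ← hKp1] at h2
    rw [← hKp1]
    nlinarith [h2]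
  have hnum : K ^ p - M ^ p ≤ p * K ^ (p - 1) * L := by
    calc K ^ p - M ^ p ≤ p * K ^ (p - 1) * (K - M) := hber
    _ ≤ p * K ^ (p - 1) * L := by
        apply mul_le_mul_of_nonneg_left hKsubM (by positivity)
  -- auxiliary bounds
  have hL2β : L ^ (2*β) ≤ M ^ (2*β) := Real.rpow_le_rpow (le_of_lt hLpos) hLM (by linarith)
  have hKs1 : K ^ (s-1) ≤ (2:ℝ)^s * M^(s-1) := by
    have h1 : K ^ s ≤ (2:ℝ)^s * M ^ s := by
      calc K ^ s ≤ (2*M) ^ s := Real.rpow_le_rpow (le_of_lt hKpos) hK2M hs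
      _ = (2:ℝ)^s * M^s := Real.mul_rpow (by norm_num) (le_of_lt hMpos)
    have h2 : K⁻¹ ≤ M⁻¹ := inv_anti₀ hMpos hMK
    calc K ^ (s-1) = K ^ s * K⁻¹ := by
          rw [sub_eq_add_neg, Real.rpow_add hKpos, Real.rpow_neg_one]
    _ ≤ ((2:ℝ)^s * M^s) * M⁻¹ := by
          apply mul_le_mul h1 h2 (by positivity) (by positivity)
    _ = (2:ℝ)^s * M^(s-1) := by
          rw [sub_eq_add_neg, Real.rpow_add hMpos, Real.rpow_neg_one]; ring
  calc (K ^ p - M ^ p) / (M ^ (2*β) * K ^ (2*β))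
      ≤ (p * K ^ (p - 1) * L) / (M ^ (2*β) * K ^ (2*β)) := by gcongr
    _ = p * L * (K ^ (2*s - 1) * M ^ (-(2*β))) := by
        rw [show p - 1 = (2*s - 1) + 2*β by rw [hp_def]; ring,
          Real.rpow_add hKpos, Real.rpow_neg (le_of_lt hMpos)]
        have h1 : M ^ (2*β) ≠ 0 := by positivity
        have h2 : K ^ (2*β) ≠ 0 := by positivity
        field_simp
    _ = p * (L ^ (1 - 2*β) * L ^ (2*β)) * ((K ^ (s-1) * K ^ s) * M ^ (-(2*β))) := by
        rw [← Real.rpow_add hLpos, ← Real.rpow_add hKpos,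
          show (1 - 2*β) + 2*β = (1:ℝ) by ring, show (s-1) + s = 2*s - 1 by ring,
          Real.rpow_one]
    _ ≤ p * (L ^ (1 - 2*β) * M ^ (2*β)) * ((((2:ℝ)^s * M^(s-1)) * K ^ s) * M ^ (-(2*β))) := by
        have hM2βn : (0:ℝ) ≤ M ^ (-(2*β)) := by positivity
        gcongr
    _ = p * (2:ℝ)^s * L ^ (1 - 2*β) * M^(s-1) * K ^ s * (M ^ (2*β) * M ^ (-(2*β))) := by
        ring
    _ = p * (2:ℝ)^s * L ^ (1 - 2*β) * M^(s-1) * K ^ s := by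
        rw [← Real.rpow_add hMpos, show 2*β + -(2*β) = (0:ℝ) by ring, Real.rpow_zero, mul_one]
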